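/- Let n = 2k+1 with k ≥ 1 and let X be an n×n complex cross matrix. For each i with 0 ≤ i < k, let Y_i be the n×n matrix that agrees with the identity matrix except that its entries in positions (i,i), (i,n-1-i), (n-1-i,i), (n-1-i,n-1-i) equal the corresponding entries of X, and let D be the diagonal matrix that agrees with the identity except that its (k,k) entry equals X k k. Then X = D · Y_{k-1} · Y_{k-2} · ⋯ · Y_0 (the Y factors taken in order of decreasing index). -/
import Mathlib


/-- An `n × n` complex matrix is a *cross matrix* if its nonzero entries lie
only on the main diagonal and the anti-diagonal (0-based indices). -/
def IsCrossMatrix {n : ℕ} (X : Matrix (Fin n) (Fin n) ℂ) : Prop :=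
  ∀ i j : Fin n, j ≠ i → (i : ℕ) + (j : ℕ) + 1 ≠ n → X i j = 0

/-- For `n = 2k + 1`, a cross matrix factors as
`X = D ⬝ Y_{k-1} ⬝ Y_{k-2} ⬝ ⋯ ⬝ Y₀`, where `Yᵢ` agrees with the identity except at
the four positions `(i,i)`, `(i,n-1-i)`, `(n-1-i,i)`, `(n-1-i,n-1-i)`, where it
agrees with `X`, and `D` agrees with the identity except that `D k k = X k k`. -/
theorem crossMatrix_factorization_odd_rev (k : ℕ) (hk : 1 ≤ k)
    (X : Matrix (Fin (2 * k + 1)) (Fin (2 * k + 1)) ℂ) (hX : IsCrossMatrix X)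
    (Y : ℕ → Matrix (Fin (2 * k + 1)) (Fin (2 * k + 1)) ℂ)
    (hY : ∀ i < k, ∀ a b : Fin (2 * k + 1),
      Y i a b =
        if ((a : ℕ) = i ∨ (a : ℕ) = 2 * k + 1 - 1 - i) ∧
            ((b : ℕ) = i ∨ (b : ℕ) = 2 * k + 1 - 1 - i) then
          X a b
        else (1 : Matrix (Fin (2 * k + 1)) (Fin (2 * k + 1)) ℂ) a b)
    (D : Matrix (Fin (2 * k + 1)) (Fin (2 * k + 1)) ℂ)
    (hD : ∀ a b : Fin (2 * k + 1),
      D a b =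
        if (a : ℕ) = k ∧ (b : ℕ) = k then X a b
        else (1 : Matrix (Fin (2 * k + 1)) (Fin (2 * k + 1)) ℂ) a b) :
    X = D * (((List.range k).reverse).map Y).prod := by
  have hn : ∀ a : Fin (2 * k + 1), (a : ℕ) ≤ 2 * k := fun a => Nat.lt_succ_iff.mp a.isLt
  have hX0 : ∀ a b : Fin (2 * k + 1), (a : ℕ) ≠ (b : ℕ) → (a : ℕ) + (b : ℕ) ≠ 2 * k →
      X a b = 0 := by
    intro a b h1 h2
    exact hX a b (fun h => h1 (congrArg Fin.val h.symm)) (by omega)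
  have hne : ∀ a b : Fin (2 * k + 1), (a : ℕ) ≠ (b : ℕ) → a ≠ b :=
    fun a b h hab => h (congrArg Fin.val hab)
  have key : ∀ m, m ≤ k → ∀ a b : Fin (2 * k + 1),
      (((List.range m).reverse).map Y).prod a b =
        if (a : ℕ) < m ∨ 2 * k - (a : ℕ) < m ∨ (b : ℕ) < m ∨ 2 * k - (b : ℕ) < m
        then X a b else (1 : Matrix (Fin (2 * k + 1)) (Fin (2 * k + 1)) ℂ) a b := by
    intro m
    induction m with
    | zero => intro _ a b; simp
    | succ m ih =>
      intro hm a b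
      have hmk : m < k := hm
      have ha2 : (a : ℕ) ≤ 2 * k := hn a
      have hb2 : (b : ℕ) ≤ 2 * k := hn b
      rw [List.range_succ, List.reverse_append, List.reverse_singleton,
        List.singleton_append, List.map_cons, List.prod_cons, Matrix.mul_apply]
      set P := (((List.range m).reverse).map Y).prod with hP
      by_cases ha : (a : ℕ) = m ∨ (a : ℕ) = 2 * k - m
      · -- row a is one of the two rows of the active pair
        set p : Fin (2 * k + 1) := ⟨m, by omega⟩ with hpdef
        set q : Fin (2 * k + 1) := ⟨2 * k - m, by omega⟩ with hqdef
        have hp : (p : ℕ) = m := rfl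
        have hq : (q : ℕ) = 2 * k - m := rfl
        have hpq : p ≠ q := hne p q (by omega)
        have hsum : ∑ c, Y m a c * P c b = Y m a p * P p b + Y m a q * P q b := by
          rw [← Finset.sum_subset (Finset.subset_univ ({p, q} : Finset (Fin (2 * k + 1))))]
          · rw [Finset.sum_pair hpq]
          · intro c _ hc
            simp only [Finset.mem_insert, Finset.mem_singleton, not_or] at hc
            have hc1 : (c : ℕ) ≠ m := fun h => hc.1 (Fin.ext (by omega))
            have hc2 : (c : ℕ) ≠ 2 * k - m := fun h => hc.2 (Fin.ext (by omega))
            rw [hY m hmk, if_neg, Matrix.one_apply_ne (hne a c (by omega)), zero_mul]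
            rintro ⟨-, h | h⟩ <;> omega
        rw [hsum, hY m hmk, hY m hmk,
          if_pos (show _ ∧ _ from ⟨by omega, Or.inl (by omega)⟩),
          if_pos (show _ ∧ _ from ⟨by omega, Or.inr (by omega)⟩),
          ih hmk.le, ih hmk.le]
        rw [if_pos (show (a : ℕ) < m + 1 ∨ _ ∨ _ ∨ _ by omega)]
        by_cases hb : (b : ℕ) < m ∨ 2 * k - (b : ℕ) < m
        · rw [if_pos (by omega), if_pos (by omega)]
          rw [hX0 p b (by omega) (by omega), hX0 q b (by omega) (by omega),
            hX0 a b (by omega) (by omega)]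
          ring
        · rw [if_neg (by omega), if_neg (by omega)]
          by_cases hbp : (b : ℕ) = m
          · have hbp' : b = p := Fin.ext (by omega)
            rw [hbp', Matrix.one_apply_eq, Matrix.one_apply_ne (hne q p (by omega))]
            ring
          · by_cases hbq : (b : ℕ) = 2 * k - m
            · have hbq' : b = q := Fin.ext (by omega)
              rw [hbq', Matrix.one_apply_eq, Matrix.one_apply_ne (hne p q (by omega))]
              ring
            · rw [Matrix.one_apply_ne (hne p b (by omega)),
                Matrix.one_apply_ne (hne q b (by omega)),
                hX0 a b (by omega) (by omega)]
              ring
      · -- row a is untouched by Y m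
        have hrow : ∀ c, Y m a c = (1 : Matrix (Fin (2 * k + 1)) (Fin (2 * k + 1)) ℂ) a c := by
          intro c
          rw [hY m hmk, if_neg]
          rintro ⟨h | h, -⟩ <;> omega
        have hsum : ∑ c, Y m a c * P c b = P a b := by
          calc ∑ c, Y m a c * P c b
              = ∑ c, (1 : Matrix (Fin (2 * k + 1)) (Fin (2 * k + 1)) ℂ) a c * P c b := by
                simp_rw [hrow]
            _ = ((1 : Matrix (Fin (2 * k + 1)) (Fin (2 * k + 1)) ℂ) * P) a b := by
                rw [Matrix.mul_apply]
            _ = P a b := by rw [Matrix.one_mul]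
        rw [hsum, ih hmk.le]
        split_ifs with h1 h2 h3
        · rfl
        · omega
        · -- b just entered the region; both sides are 0
          rw [Matrix.one_apply_ne (hne a b (by omega)), hX0 a b (by omega) (by omega)]
        · rfl
  -- finish with D
  ext a b
  rw [Matrix.mul_apply]
  have ha2 : (a : ℕ) ≤ 2 * k := hn a
  have hb2 : (b : ℕ) ≤ 2 * k := hn b
  by_cases hak : (a : ℕ) = k
  · have hsum : ∑ c, D a c * (((List.range k).reverse).map Y).prod c b =
        X a a * (((List.range k).reverse).map Y).prod a b := by
      rw [Finset.sum_eq_single a]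
      · rw [hD a a, if_pos ⟨hak, hak⟩]
      · intro c _ hca
        rw [hD a c, if_neg, Matrix.one_apply_ne (fun h => hca (h.symm)), zero_mul]
        rintro ⟨-, h2⟩
        exact hca (Fin.ext (by omega))
      · intro h; exact absurd (Finset.mem_univ a) h
    rw [hsum, key k le_rfl]
    by_cases hbk : (b : ℕ) = k
    · have : b = a := Fin.ext (by omega)
      subst this
      rw [if_neg (by omega), Matrix.one_apply_eq, mul_one]
    · rw [if_pos (by omega), hX0 a b (by omega) (by omega), mul_zero]
  · have hsum : ∑ c, D a c * (((List.range k).reverse).map Y).prod c b =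
        (((List.range k).reverse).map Y).prod a b := by
      calc ∑ c, D a c * (((List.range k).reverse).map Y).prod c b
          = ∑ c, (1 : Matrix (Fin (2 * k + 1)) (Fin (2 * k + 1)) ℂ) a c *
              (((List.range k).reverse).map Y).prod c b := by
            refine Finset.sum_congr rfl fun c _ => ?_
            rw [hD a c, if_neg (fun h => hak h.1)]
        _ = ((1 : Matrix (Fin (2 * k + 1)) (Fin (2 * k + 1)) ℂ) *
              (((List.range k).reverse).map Y).prod) a b := by rw [Matrix.mul_apply]
        _ = _ := by rw [Matrix.one_mul]
    rw [hsum, key k le_rfl, if_pos (by omega)]
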